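/- Let (Ω, 𝓕, P) be a probability space and C ⊆ L^∞ a convex cone with −L^∞₊ ⊆ C. Assume M₁ ∩ ℙ ≠ ∅ and let f be a random variable with f ∈ L¹(Q) for every Q ∈ M₁. Then inf{x ∈ ℝ : f − x lies in the L¹(Q)-norm closure of C for every Q ∈ M₁} = sup{E_Q[f] : Q ∈ M₁} (equality in ℝ ∪ {+∞}). -/

import Mathlib

open MeasureTheory
open scoped ENNReal NNReal

variable {Ω : Type*} [MeasurableSpace Ω]

/-- The set `M₁` of separating measures for the convex cone `C ⊆ L^∞` of bounded
super-replicable claims: probability measures `Q ≪ P` with `E_Q[g] ≤ 0` for all `g ∈ C`. -/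
def sepMeasures (P : Measure Ω) (C : Set (Ω → ℝ)) : Set (Measure Ω) :=
  {Q | IsProbabilityMeasure Q ∧ Q ≪ P ∧ ∀ g ∈ C, ∫ ω, g ω ∂Q ≤ 0}

/-- `C_id`: the random variables lying, for every `Q ∈ M₁`, in the `L¹(Q)`-norm closure
of `C` (the case `Φ = id` of `C_Φ`, for which `M_Φ = M₁`). -/
def Cid (P : Measure Ω) (C : Set (Ω → ℝ)) : Set (Ω → ℝ) :=
  {f | ∀ Q ∈ sepMeasures P C, Integrable f Q ∧
    ∀ ε : ℝ, 0 < ε → ∃ g ∈ C, ∫ ω, |f ω - g ω| ∂Q < ε}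

lemma memLp_top_ac {P Q : Measure Ω} (hQP : Q ≪ P) {g : Ω → ℝ} (hg : MemLp g ⊤ P) :
    MemLp g ⊤ Q := by
  refine ⟨hg.1.mono_ac hQP, ?_⟩
  have h2 := hg.2
  rw [eLpNorm_exponent_top] at h2 ⊢
  exact lt_of_le_of_lt (eLpNormEssSup_mono_measure g hQP) h2

lemma integrable_ac {P Q : Measure Ω} [IsFiniteMeasure Q] (hQP : Q ≪ P) {g : Ω → ℝ}
    (hg : MemLp g ⊤ P) : Integrable g Q :=
  (memLp_top_ac hQP hg).integrable le_top

lemma memLp_two_ac {P Q : Measure Ω} [IsFiniteMeasure Q] (hQP : Q ≪ P) {g : Ω → ℝ}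
    (hg : MemLp g ⊤ P) : MemLp g 2 Q :=
  (memLp_top_ac hQP hg).mono_exponent le_top

theorem key (P : Measure Ω) [IsProbabilityMeasure P] (C : Set (Ω → ℝ))
    (hCbdd : ∀ g ∈ C, MemLp g ⊤ P)
    (hCcone : ∀ f ∈ C, ∀ g ∈ C, ∀ a b : ℝ, 0 ≤ a → 0 ≤ b →
      (fun ω => a * f ω + b * g ω) ∈ C)
    (hCneg : ∀ f : Ω → ℝ, MemLp f ⊤ P → (∀ᵐ ω ∂P, f ω ≤ 0) → f ∈ C)
    (f : Ω → ℝ) (hf : ∀ Q ∈ sepMeasures P C, Integrable f Q)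
    (x : ℝ) (hx : ∀ Q ∈ sepMeasures P C, ∫ ω, f ω ∂Q ≤ x)
    {Q : Measure Ω} (hQ : Q ∈ sepMeasures P C) :
    ∀ ε : ℝ, 0 < ε → ∃ g ∈ C, ∫ ω, |f ω - x - g ω| ∂Q < ε := by
  obtain ⟨hQprob, hQP, hQsep⟩ := hQ
  by_contra hcon
  push_neg at hcon
  obtain ⟨ε, hε, hεle⟩ := hcon
  haveI : Fact ((1:ℝ≥0∞) ≤ 2) := ⟨one_le_two⟩
  -- the target function in L¹(Q)
  set F0 : Ω → ℝ := fun ω => f ω - x with hF0def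
  have hF0 : Integrable F0 Q := (hf Q ⟨hQprob, hQP, hQsep⟩).sub (integrable_const x)
  set F : Lp ℝ 1 Q := hF0.toL1 F0 with hFdef
  -- C as a subset of L¹(Q)
  set T : Set (Lp ℝ 1 Q) := {G | ∃ g ∈ C, (G : Ω → ℝ) =ᵐ[Q] g} with hTdef
  have hzeroC : (fun _ : Ω => (0:ℝ)) ∈ C := by
    refine hCneg _ (memLp_const 0) (Filter.Eventually.of_forall fun ω => le_rfl)
  have hTconv : Convex ℝ T := by
    rintro G₁ ⟨g₁, hg₁, hG₁⟩ G₂ ⟨g₂, hg₂, hG₂⟩ a b ha hb hab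
    have e2 : (⇑(a • G₁) + ⇑(b • G₂) : Ω → ℝ) =ᵐ[Q] fun ω => a * g₁ ω + b * g₂ ω := by
      filter_upwards [Lp.coeFn_smul a G₁, Lp.coeFn_smul b G₂, hG₁, hG₂] with ω h2 h3 h4 h5
      simp only [Pi.add_apply]
      rw [h2, h3, Pi.smul_apply, Pi.smul_apply, h4, h5, smul_eq_mul, smul_eq_mul]
    exact ⟨_, hCcone _ hg₁ _ hg₂ a b ha hb, (Lp.coeFn_add (a • G₁) (b • G₂)).trans e2⟩
  have hFnotin : F ∉ closure T := by
    intro hmem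
    rw [Metric.mem_closure_iff] at hmem
    obtain ⟨G, ⟨g, hgC, hGg⟩, hdist⟩ := hmem ε hε
    have : dist F G = ∫ ω, |F0 ω - g ω| ∂Q := by
      rw [L1.dist_eq_integral_dist]
      refine integral_congr_ae ?_
      filter_upwards [hF0.coeFn_toL1, hGg] with ω h1 h2
      rw [h1, h2, Real.dist_eq]
    exact absurd hdist (not_lt.2 (this ▸ hεle g hgC))
  obtain ⟨Λ, u, hu, huF⟩ :=
    geometric_hahn_banach_closed_point (hTconv.closure) isClosed_closure hFnotin
  have hupos : 0 < u := by
    have h0T : (0 : Lp ℝ 1 Q) ∈ T := ⟨_, hzeroC, Lp.coeFn_zero ℝ 1 Q⟩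
    have := hu 0 (subset_closure h0T)
    simpa using this
  -- integrability of elements of C w.r.t. Q
  have hCint : ∀ g ∈ C, Integrable g Q := fun g hg => integrable_ac hQP (hCbdd g hg)
  have hΛC : ∀ g (hg : g ∈ C), Λ ((hCint g hg).toL1 g) ≤ 0 := by
    intro g hg
    by_contra hpos
    push_neg at hpos
    set t : ℝ := (u + 1) / Λ ((hCint g hg).toL1 g) with htdef
    have ht : 0 < t := div_pos (by linarith) hpos
    have htg : (fun ω => t * g ω + 0 * g ω) ∈ C := hCcone g hg g hg t 0 ht.le le_rfl
    have hmemT : t • ((hCint g hg).toL1 g) ∈ T := by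
      have e2 : (t • (⇑((hCint g hg).toL1 g)) : Ω → ℝ) =ᵐ[Q] fun ω => t * g ω + 0 * g ω := by
        filter_upwards [(hCint g hg).coeFn_toL1] with ω h2
        simp only [Pi.smul_apply]
        rw [h2, smul_eq_mul]
        ring
      exact ⟨_, htg, (Lp.coeFn_smul t ((hCint g hg).toL1 g)).trans e2⟩
    have := hu _ (subset_closure hmemT)
    rw [Λ.map_smul, smul_eq_mul] at this
    rw [htdef, div_mul_cancel₀] at this
    · linarith
    · exact ne_of_gt hpos
  -- inclusion of L² into L¹
  set i : Lp ℝ 2 Q → Lp ℝ 1 Q :=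
    fun G => ((Lp.memLp G).mono_exponent one_le_two).toLp G with hidef
  have hicoe : ∀ G : Lp ℝ 2 Q, (⇑(i G) : Ω → ℝ) =ᵐ[Q] ⇑G := fun G => MemLp.coeFn_toLp _
  have hi_add : ∀ G G' : Lp ℝ 2 Q, i (G + G') = i G + i G' := by
    intro G G'
    apply Lp.ext
    exact (hicoe _).trans <| (Lp.coeFn_add G G').trans <|
      ((hicoe G).symm.add (hicoe G').symm).trans (Lp.coeFn_add (i G) (i G')).symm
  have hi_smul : ∀ (c : ℝ) (G : Lp ℝ 2 Q), i (c • G) = c • i G := by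
    intro c G
    apply Lp.ext
    refine (hicoe _).trans <| (Lp.coeFn_smul c G).trans <| ?_
    refine Filter.EventuallyEq.trans ?_ (Lp.coeFn_smul c (i G)).symm
    filter_upwards [hicoe G] with ω hω
    simp [hω]
  have hinorm : ∀ G : Lp ℝ 2 Q, ‖i G‖ ≤ ‖G‖ := by
    intro G
    rw [Lp.norm_toLp, Lp.norm_def]
    exact ENNReal.toReal_mono (Lp.eLpNorm_ne_top G)
      (eLpNorm_le_eLpNorm_of_exponent_le one_le_two (Lp.aestronglyMeasurable G))
  set Λ₂ : Lp ℝ 2 Q →L[ℝ] ℝ :=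
    LinearMap.mkContinuous
      { toFun := fun G => Λ (i G)
        map_add' := fun G G' => by
          show Λ (i (G + G')) = Λ (i G) + Λ (i G')
          rw [hi_add, map_add]
        map_smul' := fun c G => by
          show Λ (i (c • G)) = c • Λ (i G)
          rw [hi_smul, Λ.map_smul] }
      ‖Λ‖ (fun G => by
        calc ‖Λ (i G)‖ ≤ ‖Λ‖ * ‖i G‖ := Λ.le_opNorm _
        _ ≤ ‖Λ‖ * ‖G‖ := mul_le_mul_of_nonneg_left (hinorm G) (norm_nonneg Λ)) with hΛ₂def
  haveI : CompleteSpace (Lp ℝ 2 Q) := inferInstance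
  set h : Lp ℝ 2 Q := (InnerProductSpace.toDual ℝ (Lp ℝ 2 Q)).symm Λ₂ with hhdef
  have hinner : ∀ G : Lp ℝ 2 Q, ∫ ω, h ω * G ω ∂Q = Λ (i G) := by
    intro G
    have h1 : inner ℝ h G = Λ₂ G := InnerProductSpace.toDual_symm_apply
    rw [L2.inner_def] at h1
    simp only [RCLike.inner_apply, conj_trivial] at h1
    rw [← show Λ₂ G = Λ (i G) from rfl, ← h1]
    exact integral_congr_ae (Filter.Eventually.of_forall fun ω => mul_comm _ _)
  have hiL1 : ∀ (g : Ω → ℝ) (hg2 : MemLp g 2 Q) (hg1 : Integrable g Q),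
      i (hg2.toLp g) = hg1.toL1 g := by
    intro g hg2 hg1
    apply Lp.ext
    exact (hicoe _).trans <| hg2.coeFn_toLp.trans hg1.coeFn_toL1.symm
  have hpair : ∀ (g : Ω → ℝ) (hg2 : MemLp g 2 Q) (hg1 : Integrable g Q),
      ∫ ω, h ω * g ω ∂Q = Λ (hg1.toL1 g) := by
    intro g hg2 hg1
    rw [← hiL1 g hg2 hg1, ← hinner (hg2.toLp g)]
    refine integral_congr_ae ?_
    filter_upwards [hg2.coeFn_toLp] with ω hω
    rw [hω]
  have hhint : Integrable (⇑h) Q := (Lp.memLp h).integrable one_le_two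
  -- indicator functions
  have hχtop : ∀ s : Set Ω, MeasurableSet s →
      MemLp (s.indicator (fun _ => (1:ℝ))) ⊤ P := by
    intro s hs
    refine memLp_top_of_bound
      ((measurable_const.indicator hs).aestronglyMeasurable) 1 ?_
    refine Filter.Eventually.of_forall fun ω => ?_
    by_cases hω : ω ∈ s <;> simp [Set.indicator_apply, hω]
  have hχ2 : ∀ s : Set Ω, MeasurableSet s →
      MemLp (s.indicator (fun _ => (1:ℝ))) 2 Q :=
    fun s hs => memLp_two_ac hQP (hχtop s hs)
  have hχint : ∀ s : Set Ω, MeasurableSet s →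
      Integrable (s.indicator (fun _ => (1:ℝ))) Q :=
    fun s hs => integrable_ac hQP (hχtop s hs)
  have hχC : ∀ s : Set Ω, MeasurableSet s →
      (fun ω => -(s.indicator (fun _ => (1:ℝ)) ω)) ∈ C := by
    intro s hs
    refine hCneg _ ((hχtop s hs).neg) ?_
    refine Filter.Eventually.of_forall fun ω => ?_
    by_cases hω : ω ∈ s <;> simp [Set.indicator_apply, hω]
  have hindmul : ∀ (s : Set Ω), (fun ω => h ω * s.indicator (fun _ => (1:ℝ)) ω)
      = s.indicator (fun ω => h ω) := by
    intro s
    funext ω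
    by_cases hω : ω ∈ s <;> simp [Set.indicator_apply, hω]
  have hsetint : ∀ s : Set Ω, (hs : MeasurableSet s) →
      ∫ ω in s, h ω ∂Q = Λ ((hχint s hs).toL1 _) := by
    intro s hs
    rw [← hpair _ (hχ2 s hs) (hχint s hs), hindmul s, integral_indicator hs]
  have hsetpos : ∀ s : Set Ω, MeasurableSet s → 0 ≤ ∫ ω in s, h ω ∂Q := by
    intro s hs
    rw [hsetint s hs]
    have hneg := hΛC _ (hχC s hs)
    have htoneg : Integrable.toL1 _ (hCint _ (hχC s hs)) = -((hχint s hs).toL1 _) := by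
      apply Lp.ext
      refine (Integrable.coeFn_toL1 _).trans ?_
      refine Filter.EventuallyEq.trans ?_ (Lp.coeFn_neg _).symm
      filter_upwards [(hχint s hs).coeFn_toL1] with ω hω
      simp only [Pi.neg_apply]
      rw [hω]
    rw [htoneg, map_neg] at hneg
    linarith
  have hsetle : ∀ s : Set Ω, MeasurableSet s →
      ∫ ω in s, h ω ∂Q ≤ ‖Λ‖ * (Q s).toReal := by
    intro s hs
    rw [hsetint s hs]
    refine le_trans (le_abs_self _) (le_trans (Λ.le_opNorm _) ?_)
    rw [L1.norm_of_fun_eq_integral_norm]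
    have : ∫ ω, ‖s.indicator (fun _ => (1:ℝ)) ω‖ ∂Q = (Q s).toReal := by
      rw [show (fun ω => ‖s.indicator (fun _ => (1:ℝ)) ω‖)
          = s.indicator (fun _ => (1:ℝ)) by
        funext ω; by_cases hω : ω ∈ s <;> simp [Set.indicator_apply, hω]]
      rw [integral_indicator_const (1:ℝ) hs, smul_eq_mul, mul_one, measureReal_def]
    rw [this]
  have hnonneg : 0 ≤ᵐ[Q] ⇑h :=
    ae_nonneg_of_forall_setIntegral_nonneg hhint fun s hs _ => hsetpos s hs
  have hble : ∀ᵐ ω ∂Q, h ω ≤ ‖Λ‖ := by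
    have h0 : 0 ≤ᵐ[Q] fun ω => ‖Λ‖ - h ω := by
      refine ae_nonneg_of_forall_setIntegral_nonneg ((integrable_const ‖Λ‖).sub hhint)
        fun s hs _ => ?_
      rw [integral_sub (integrable_const ‖Λ‖).integrableOn hhint.integrableOn,
        setIntegral_const, smul_eq_mul, mul_comm]
      have := hsetle s hs
      rw [measureReal_def]
      linarith [hsetle s hs]
    filter_upwards [h0] with ω hω
    simpa using hω
  -- truncations of F0
  set gtr : ℕ → Ω → ℝ := fun n ω => max (min (F0 ω) n) (-(n:ℝ)) with hgtrdef
  have hgtrm : ∀ n, AEStronglyMeasurable (gtr n) Q := fun n =>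
    ((hF0.aestronglyMeasurable.aemeasurable.min aemeasurable_const).max
      aemeasurable_const).aestronglyMeasurable
  have habs : ∀ n ω, |gtr n ω| ≤ |F0 ω| := by
    intro n ω
    rw [abs_le]
    constructor
    · exact le_trans (le_min (neg_abs_le _)
        ((neg_nonpos.2 (abs_nonneg _)).trans (Nat.cast_nonneg n))) (le_max_left _ _)
    · exact max_le ((min_le_left _ _).trans (le_abs_self _))
        ((neg_nonpos.2 (Nat.cast_nonneg n)).trans (abs_nonneg _))
  have hgbd : ∀ n, MemLp (gtr n) ⊤ Q := by
    intro n
    refine memLp_top_of_bound (hgtrm n) n (Filter.Eventually.of_forall fun ω => ?_)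
    rw [Real.norm_eq_abs, abs_le]
    exact ⟨le_max_right _ _, max_le (min_le_right _ _) (neg_le_self (Nat.cast_nonneg n))⟩
  have hgint : ∀ n, Integrable (gtr n) Q := fun n => (hgbd n).integrable le_top
  have hg2 : ∀ n, MemLp (gtr n) 2 Q := fun n => (hgbd n).mono_exponent le_top
  have htend : ∀ ω, Filter.Tendsto (fun n => gtr n ω) Filter.atTop (nhds (F0 ω)) := by
    intro ω
    refine tendsto_atTop_of_eventually_const (i₀ := ⌈|F0 ω|⌉₊) fun n hn => ?_
    have hle : |F0 ω| ≤ (n : ℝ) :=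
      (Nat.le_ceil _).trans (Nat.cast_le.2 hn)
    rw [hgtrdef]
    simp only
    rw [min_eq_left ((le_abs_self _).trans hle),
      max_eq_left (le_trans (neg_le_neg hle) (neg_abs_le _))]
  -- limit 1 : Λ (toL1 (gtr n)) → Λ F
  have hdist : Filter.Tendsto (fun n => dist ((hgint n).toL1 (gtr n)) F) Filter.atTop
      (nhds 0) := by
    have heq : ∀ n, dist ((hgint n).toL1 (gtr n)) F = ∫ ω, |gtr n ω - F0 ω| ∂Q := by
      intro n
      rw [L1.dist_eq_integral_dist]
      refine integral_congr_ae ?_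
      filter_upwards [(hgint n).coeFn_toL1, hF0.coeFn_toL1] with ω h1 h2
      rw [h1, h2, Real.dist_eq]
    rw [show (fun n => dist ((hgint n).toL1 (gtr n)) F)
        = fun n => ∫ ω, |gtr n ω - F0 ω| ∂Q from funext heq]
    have h0 : (0:ℝ) = ∫ (_ : Ω), (0:ℝ) ∂Q := by simp
    rw [h0]
    refine tendsto_integral_of_dominated_convergence (fun ω => 2 * |F0 ω|)
      (fun n => ((hgtrm n).sub hF0.aestronglyMeasurable).norm) (hF0.abs.const_mul 2)
      (fun n => Filter.Eventually.of_forall fun ω => ?_)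
      (Filter.Eventually.of_forall fun ω => ?_)
    · rw [Real.norm_eq_abs, abs_abs]
      calc |gtr n ω - F0 ω| ≤ |gtr n ω| + |F0 ω| := abs_sub _ _
      _ ≤ 2 * |F0 ω| := by linarith [habs n ω]
    · have h1 : Filter.Tendsto (fun n => |gtr n ω - F0 ω|) Filter.atTop
          (nhds |F0 ω - F0 ω|) :=
        Filter.Tendsto.abs (Filter.Tendsto.sub (htend ω) tendsto_const_nhds)
      simpa using h1
  have hlim1 : Filter.Tendsto (fun n => Λ ((hgint n).toL1 (gtr n))) Filter.atTop
      (nhds (Λ F)) := by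
    refine (Λ.continuous.tendsto F).comp ?_
    rw [tendsto_iff_dist_tendsto_zero]
    exact hdist
  -- limit 2 : ∫ h * gtr n → ∫ h * F0
  have hlim2 : Filter.Tendsto (fun n => ∫ ω, h ω * gtr n ω ∂Q) Filter.atTop
      (nhds (∫ ω, h ω * F0 ω ∂Q)) := by
    refine tendsto_integral_of_dominated_convergence (fun ω => ‖Λ‖ * |F0 ω|)
      (fun n => (Lp.aestronglyMeasurable h).mul (hgtrm n)) (hF0.abs.const_mul ‖Λ‖)
      (fun n => ?_) ?_
    · filter_upwards [hnonneg, hble] with ω h1 h2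
      rw [Real.norm_eq_abs, abs_mul]
      exact mul_le_mul (by rwa [abs_of_nonneg h1]) (habs n ω) (abs_nonneg _)
        (norm_nonneg Λ)
    · exact Filter.Eventually.of_forall fun ω => (tendsto_const_nhds.mul (htend ω))
  have hkey : Λ F = ∫ ω, h ω * F0 ω ∂Q := by
    refine tendsto_nhds_unique ?_ hlim2
    refine hlim1.congr fun n => ?_
    exact (hpair _ (hg2 n) (hgint n)).symm
  have hhF0pos : 0 < ∫ ω, h ω * F0 ω ∂Q := by
    rw [← hkey]; linarith
  -- the density measure
  set t : ℝ := ∫ ω, h ω ∂Q with htdef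
  have htpos : 0 < t := by
    rcases lt_or_eq_of_le (integral_nonneg_of_ae hnonneg) with hlt | heq
    · exact hlt
    · exfalso
      have hzero : ⇑h =ᵐ[Q] 0 :=
        (integral_eq_zero_iff_of_nonneg_ae hnonneg hhint).1 heq.symm
      have : ∫ ω, h ω * F0 ω ∂Q = 0 := by
        rw [← integral_zero Ω ℝ (μ := Q)]
        refine integral_congr_ae ?_
        filter_upwards [hzero] with ω hω
        simp [hω]
      rw [this] at hhF0pos
      exact lt_irrefl 0 hhF0pos
  have hhaem : AEMeasurable (fun ω => Real.toNNReal (h ω)) Q :=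
    measurable_real_toNNReal.comp_aemeasurable (Lp.aestronglyMeasurable h).aemeasurable
  set ν : Measure Ω := Q.withDensity (fun ω => (Real.toNNReal (h ω) : ℝ≥0∞)) with hνdef
  have hν_int : ∀ φ : Ω → ℝ, ∫ ω, φ ω ∂ν = ∫ ω, h ω * φ ω ∂Q := by
    intro φ
    rw [hνdef, integral_withDensity_eq_integral_smul₀ hhaem φ]
    refine integral_congr_ae ?_
    filter_upwards [hnonneg] with ω hω
    rw [NNReal.smul_def, smul_eq_mul, Real.coe_toNNReal _ hω]
  have hνuniv : ν Set.univ = ENNReal.ofReal t := by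
    rw [hνdef, withDensity_apply _ MeasurableSet.univ, Measure.restrict_univ]
    rw [htdef, ofReal_integral_eq_lintegral_ofReal hhint hnonneg]
    rfl
  set Q' : Measure Ω := (ENNReal.ofReal t)⁻¹ • ν with hQ'def
  have hQ'prob : IsProbabilityMeasure Q' := by
    constructor
    rw [hQ'def, Measure.smul_apply, hνuniv, smul_eq_mul,
      ENNReal.inv_mul_cancel ((ENNReal.ofReal_pos.2 htpos).ne') ENNReal.ofReal_ne_top]
  have hQ'P : Q' ≪ P := by
    have h1 : ν ≪ Q := withDensity_absolutelyContinuous _ _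
    have h2 : Q' ≪ ν := by
      refine Measure.AbsolutelyContinuous.mk fun s _ hs0 => ?_
      rw [hQ'def, Measure.smul_apply, hs0, smul_zero]
    exact (h2.trans h1).trans hQP
  have hQ'int : ∀ φ : Ω → ℝ, ∫ ω, φ ω ∂Q' = t⁻¹ * ∫ ω, h ω * φ ω ∂Q := by
    intro φ
    rw [hQ'def, integral_smul_measure, hν_int φ, ENNReal.toReal_inv,
      ENNReal.toReal_ofReal htpos.le, smul_eq_mul]
  have hQ'sep : Q' ∈ sepMeasures P C := by
    refine ⟨hQ'prob, hQ'P, fun g hg => ?_⟩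
    rw [hQ'int g]
    have h1 : ∫ ω, h ω * g ω ∂Q ≤ 0 := by
      rw [hpair g (memLp_two_ac hQP (hCbdd g hg)) (hCint g hg)]
      exact hΛC g hg
    exact mul_nonpos_of_nonneg_of_nonpos (inv_nonneg.2 htpos.le) h1
  -- contradiction
  have hxQ' : ∫ ω, f ω ∂Q' ≤ x := hx Q' hQ'sep
  have hfQ' : Integrable f Q' := hf Q' hQ'sep
  have hFQ' : ∫ ω, F0 ω ∂Q' = ∫ ω, f ω ∂Q' - x := by
    rw [hF0def]
    rw [integral_sub hfQ' (integrable_const x), integral_const]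
    haveI := hQ'prob
    simp
  have hpos' : 0 < ∫ ω, F0 ω ∂Q' := by
    rw [hQ'int F0]
    exact mul_pos (inv_pos.2 htpos) hhF0pos
  rw [hFQ'] at hpos'
  linarith

/-- Corollary 4 of Biagini–Frittelli (weak super replication duality, case `Φ = id`): if
`M₁` contains a measure equivalent to `P` and `f ∈ L¹(Q)` for all `Q ∈ M₁`, then
`inf {x ∈ ℝ : f - x` lies in the `L¹(Q)`-closure of `C` for every `Q ∈ M₁} =
sup {E_Q[f] : Q ∈ M₁}` in `ℝ ∪ {+∞}`. -/
theorem weak_superreplication_duality_id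
    (P : Measure Ω) [IsProbabilityMeasure P]
    (C : Set (Ω → ℝ))
    (hCbdd : ∀ g ∈ C, MemLp g ⊤ P)
    (hCcone : ∀ f ∈ C, ∀ g ∈ C, ∀ a b : ℝ, 0 ≤ a → 0 ≤ b →
      (fun ω => a * f ω + b * g ω) ∈ C)
    (hCneg : ∀ f : Ω → ℝ, MemLp f ⊤ P → (∀ᵐ ω ∂P, f ω ≤ 0) → f ∈ C)
    (hM₁P : ∃ Q ∈ sepMeasures P C, P ≪ Q)
    (f : Ω → ℝ) (hf : ∀ Q ∈ sepMeasures P C, Integrable f Q) :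
    sInf ((fun x : ℝ => (x : EReal)) '' {x : ℝ | (fun ω => f ω - x) ∈ Cid P C}) =
      sSup ((fun Q : Measure Ω => ((∫ ω, f ω ∂Q : ℝ) : EReal)) '' sepMeasures P C) := by
  obtain ⟨Q₀, hQ₀, _⟩ := hM₁P
  set A := (fun x : ℝ => (x : EReal)) '' {x : ℝ | (fun ω => f ω - x) ∈ Cid P C} with hA
  set B := (fun Q : Measure Ω => ((∫ ω, f ω ∂Q : ℝ) : EReal)) '' sepMeasures P C with hB
  -- the easy direction: every x in the primal set dominates every dual value
  have hle : ∀ x : ℝ, (fun ω => f ω - x) ∈ Cid P C →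
      ∀ Q ∈ sepMeasures P C, ∫ ω, f ω ∂Q ≤ x := by
    intro x hx Q hQ
    obtain ⟨hint, happ⟩ := hx Q hQ
    obtain ⟨hQprob, hQP, hQsep⟩ := hQ
    haveI := hQprob
    have hfQ : Integrable f Q := hf Q ⟨hQprob, hQP, hQsep⟩
    have hcore : ∀ ε : ℝ, 0 < ε → ∫ ω, f ω ∂Q - x ≤ ε := by
      intro ε hε
      obtain ⟨g, hgC, hgε⟩ := happ ε hε
      have hgint : Integrable g Q := integrable_ac hQP (hCbdd g hgC)
      have h1 : ∫ ω, f ω ∂Q - x = ∫ ω, (f ω - x) ∂Q := by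
        rw [integral_sub hfQ (integrable_const x), integral_const]
        simp
      have hint2 : Integrable (fun ω => f ω - x - g ω) Q := hint.sub hgint
      have h2 : ∫ ω, (f ω - x) ∂Q = ∫ ω, (f ω - x - g ω) ∂Q + ∫ ω, g ω ∂Q := by
        rw [show (∫ ω, (f ω - x) ∂Q) = ∫ ω, ((f ω - x - g ω) + g ω) ∂Q from
          integral_congr_ae (Filter.Eventually.of_forall fun ω => by ring),
          integral_add hint2 hgint]
      have h3 : ∫ ω, (f ω - x - g ω) ∂Q ≤ ∫ ω, |f ω - x - g ω| ∂Q := by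
        refine le_trans (le_abs_self _) ?_
        rw [← Real.norm_eq_abs]
        refine le_trans (norm_integral_le_integral_norm _) (le_of_eq ?_)
        refine integral_congr_ae (Filter.Eventually.of_forall fun ω => ?_)
        simp [Real.norm_eq_abs]
      have h4 := hQsep g hgC
      rw [h1, h2]
      linarith
    by_contra hcon
    push_neg at hcon
    have := hcore ((∫ ω, f ω ∂Q - x) / 2) (by linarith)
    linarith
  refine le_antisymm ?_ ?_
  · -- sInf A ≤ sSup B
    have hB0 : ((∫ ω, f ω ∂Q₀ : ℝ) : EReal) ∈ B := ⟨Q₀, hQ₀, rfl⟩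
    by_cases htop : sSup B = ⊤
    · rw [htop]; exact le_top
    have hbot : sSup B ≠ ⊥ := by
      intro hb
      exact EReal.coe_ne_bot _ (le_bot_iff.1 (hb ▸ le_sSup hB0))
    set s : ℝ := (sSup B).toReal with hsdef
    have hs : (s : EReal) = sSup B := EReal.coe_toReal htop hbot
    have hsle : ∀ Q ∈ sepMeasures P C, ∫ ω, f ω ∂Q ≤ s := by
      intro Q hQ
      have h1 : ((∫ ω, f ω ∂Q : ℝ) : EReal) ≤ sSup B :=
        le_sSup (⟨Q, hQ, rfl⟩ : ((∫ ω, f ω ∂Q : ℝ) : EReal) ∈ B)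
      rw [← hs] at h1
      exact_mod_cast h1
    have hmem : (fun ω => f ω - s) ∈ Cid P C := by
      intro Q hQ
      haveI := hQ.1
      exact ⟨(hf Q hQ).sub (integrable_const s),
        key P C hCbdd hCcone hCneg f hf s hsle hQ⟩
    calc sInf A ≤ (s : EReal) := sInf_le ⟨s, hmem, rfl⟩
    _ = sSup B := hs
  · -- sSup B ≤ sInf A
    refine sSup_le ?_
    rintro b ⟨Q, hQ, rfl⟩
    refine le_sInf ?_
    rintro a ⟨x, hx, rfl⟩
    show ((∫ ω, f ω ∂Q : ℝ) : EReal) ≤ (x : EReal)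
    exact_mod_cast hle x hx Q hQ
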